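/- For a non-negative continuous random variable X with cdf F and survival function F̄, and 0 < α ≠ 1, ξ_α^w(X) = (1/(2(α−1))) ∫₀^∞ x² (1 − α F̄(x)^{α−1}) dF(x). -/

import Mathlib

open MeasureTheory Set Filter Topology ProbabilityTheory

namespace WCRTEAux

set_option linter.unusedSectionVars false

variable (μ : Measure ℝ) [IsProbabilityMeasure μ]

/-- The survival function as a real-valued function. -/
noncomputable def G (μ : Measure ℝ) (y : ℝ) : ℝ := (μ (Set.Ioi y)).toReal

lemma G_eq_cdf (x : ℝ) : G μ x = 1 - cdf μ x := by
  have h : μ (Set.Ioi x) = 1 - ENNReal.ofReal (cdf μ x) := by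
    rw [ofReal_cdf, ← prob_compl_eq_one_sub measurableSet_Iic, compl_Iic]
  rw [G, h, ENNReal.toReal_sub_of_le (by rw [ofReal_cdf]; exact prob_le_one) ENNReal.one_ne_top]
  simp [ENNReal.toReal_ofReal (cdf_nonneg μ x)]

lemma G_nonneg (x : ℝ) : 0 ≤ G μ x := ENNReal.toReal_nonneg

lemma G_le_one (x : ℝ) : G μ x ≤ 1 := by
  rw [G]
  exact ENNReal.toReal_le_of_le_ofReal one_pos.le (by simpa using prob_le_one)

lemma G_anti : Antitone (G μ) := fun a b hab => by
  apply ENNReal.toReal_mono (measure_ne_top μ _)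
  exact measure_mono (Ioi_subset_Ioi hab)

lemma measure_Ioi_eq_ofReal (x : ℝ) : μ (Set.Ioi x) = ENNReal.ofReal (G μ x) := by
  rw [G, ENNReal.ofReal_toReal (measure_ne_top μ _)]

lemma G_cont (hcont : ∀ x : ℝ, μ {x} = 0) : Continuous (G μ) := by
  have hc : Continuous (cdf μ) := by
    rw [continuous_iff_continuousAt]
    intro x
    rw [(monotone_cdf μ).continuousAt_iff_leftLim_eq_rightLim, (cdf μ).rightLim_eq]
    have h := (cdf μ).measure_singleton x
    rw [measure_cdf, hcont x] at h
    have h2 : cdf μ x - Function.leftLim (cdf μ) x ≤ 0 := by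
      rwa [eq_comm, ENNReal.ofReal_eq_zero] at h
    have h3 := (monotone_cdf μ).leftLim_le (le_refl x)
    linarith
  have : (fun x => 1 - cdf μ x) = G μ := by ext x; rw [G_eq_cdf]
  rw [← this]
  exact continuous_const.sub hc

lemma G_meas : Measurable (G μ) := (G_anti μ).measurable

lemma G_tendsto_atTop : Tendsto (G μ) atTop (𝓝 0) := by
  have : (fun x => 1 - cdf μ x) = G μ := by ext x; rw [G_eq_cdf]
  rw [← this]
  have := (tendsto_const_nhds (x := (1:ℝ))).sub (tendsto_cdf_atTop μ)
  simpa using this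

lemma G_tendsto_atBot : Tendsto (G μ) atBot (𝓝 1) := by
  have : (fun x => 1 - cdf μ x) = G μ := by ext x; rw [G_eq_cdf]
  rw [← this]
  have := (tendsto_const_nhds (x := (1:ℝ))).sub (tendsto_cdf_atBot μ)
  simpa using this

lemma map_G (hcont : ∀ x : ℝ, μ {x} = 0) :
    Measure.map (G μ) μ = volume.restrict (Set.Ioc 0 1) := by
  have hGc := G_cont μ hcont
  have hGm := G_meas μ
  have hmap : IsFiniteMeasure (Measure.map (G μ) μ) :=
    by
    have := Measure.isProbabilityMeasure_map (μ := μ) hGm.aemeasurable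
    infer_instance
  refine Measure.ext_of_Iic _ _ (fun t => ?_)
  rw [Measure.map_apply hGm measurableSet_Iic, Measure.restrict_apply measurableSet_Iic]
  rcases lt_or_ge t 0 with ht | ht
  · have h1 : G μ ⁻¹' Iic t = ∅ := by
      ext y; simp only [mem_preimage, mem_Iic, mem_empty_iff_false, iff_false, not_le]
      exact lt_of_lt_of_le ht (G_nonneg μ y)
    have h2 : Iic t ∩ Ioc 0 1 = ∅ := by
      ext y; simp only [mem_inter_iff, mem_Iic, mem_Ioc, mem_empty_iff_false, iff_false]
      rintro ⟨hy1, hy2, _⟩; linarith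
    simp [h1, h2]
  rcases le_or_gt 1 t with ht1 | ht1
  · have h1 : G μ ⁻¹' Iic t = univ := by
      ext y; simp only [mem_preimage, mem_Iic, mem_univ, iff_true]
      exact le_trans (G_le_one μ y) ht1
    have h2 : Iic t ∩ Ioc 0 1 = Ioc 0 1 := by
      rw [inter_eq_right]; exact fun y hy => le_trans hy.2 ht1
    simp [h1, h2, Real.volume_Ioc]
  -- main case 0 ≤ t < 1
  have h2 : Iic t ∩ Ioc 0 1 = Ioc 0 t := by
    ext y; simp only [mem_inter_iff, mem_Iic, mem_Ioc]
    constructor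
    · rintro ⟨h1, h2, _⟩; exact ⟨h2, h1⟩
    · rintro ⟨h1, h2⟩; exact ⟨h2, h1, le_trans h2 ht1.le⟩
  rw [h2, Real.volume_Ioc]
  set S := G μ ⁻¹' Iic t with hS
  by_cases hne : S.Nonempty
  · -- S nonempty, closed, bddBelow
    have hclosed : IsClosed S := IsClosed.preimage hGc isClosed_Iic
    have hbdd : BddBelow S := by
      obtain ⟨y₀, hy₀⟩ : ∃ y₀, t < G μ y₀ := by
        have := (G_tendsto_atBot μ).eventually (eventually_gt_nhds ht1)
        rcases this.exists with ⟨y₀, hy₀⟩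
        exact ⟨y₀, hy₀⟩
      refine ⟨y₀, fun z hz => ?_⟩
      by_contra hlt
      push_neg at hlt
      exact absurd (le_trans (G_anti μ hlt.le) hz) (not_le.mpr hy₀)
    set s := sInf S with hs
    have hsS : s ∈ S := hclosed.csInf_mem hne hbdd
    have hSIci : S = Ici s := by
      apply Subset.antisymm
      · exact fun z hz => csInf_le hbdd hz
      · intro z hz
        exact le_trans (G_anti μ hz) hsS
    have hGs_le : G μ s ≤ t := hsS
    have hGs_ge : t ≤ G μ s := by
      have hev : ∀ y ∈ Iio s, t ≤ G μ y := by
        intro y hy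
        by_contra hlt
        push_neg at hlt
        exact absurd (csInf_le hbdd (le_of_lt hlt : G μ y ≤ t)) (not_le.mpr hy)
      have hlim : Tendsto (G μ) (𝓝[<] s) (𝓝 (G μ s)) :=
        (hGc.tendsto s).mono_left nhdsWithin_le_nhds
      exact ge_of_tendsto hlim (eventually_nhdsWithin_of_forall hev)
    have hGs : G μ s = t := le_antisymm hGs_le hGs_ge
    have hIci : μ S = μ (Ioi s) := by
      rw [hSIci]
      apply le_antisymm
      · calc μ (Ici s) ≤ μ ({s} ∪ Ioi s) := by
              apply measure_mono; intro z hz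
              rcases eq_or_lt_of_le (mem_Ici.mp hz : s ≤ z) with h | h
              · exact Or.inl h.symm
              · exact Or.inr h
          _ ≤ μ {s} + μ (Ioi s) := measure_union_le _ _
          _ = μ (Ioi s) := by rw [hcont s, zero_add]
      · exact measure_mono Ioi_subset_Ici_self
    rw [hIci, measure_Ioi_eq_ofReal, hGs, sub_zero]
  · -- S empty
    rw [not_nonempty_iff_eq_empty] at hne
    have ht0 : t = 0 := by
      by_contra h
      have htpos : 0 < t := lt_of_le_of_ne ht (Ne.symm h)
      have := (G_tendsto_atTop μ).eventually (eventually_lt_nhds htpos)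
      rcases this.exists with ⟨y, hy⟩
      exact absurd (⟨y, le_of_lt hy⟩ : S.Nonempty) (by rw [hne]; exact not_nonempty_empty)
    simp [hne, ht0]

lemma Ioi_ae_eq (hcont : ∀ x : ℝ, μ {x} = 0) (x : ℝ) :
    (Set.Ioi x : Set ℝ) =ᵐ[μ] {y | G μ y < G μ x} := by
  have hGc := G_cont μ hcont
  have hsub : {y | G μ y < G μ x} ⊆ Set.Ioi x := by
    intro y hy
    by_contra h
    simp only [mem_Ioi, not_lt] at h
    exact absurd (G_anti μ h) (not_le.mpr hy)
  rw [MeasureTheory.ae_eq_set]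
  have hdiff : μ (Set.Ioi x \ {y | G μ y < G μ x}) = 0 := by
    set D := Set.Ioi x \ {y | G μ y < G μ x} with hD
    have hDmem : ∀ y ∈ D, x < y ∧ G μ y = G μ x := by
      intro y hy
      rcases hy with ⟨h1, h2⟩
      simp only [mem_setOf_eq, not_lt] at h2
      exact ⟨h1, le_antisymm (G_anti μ h1.le) h2⟩
    by_cases hne : D.Nonempty
    · by_cases hbdd : BddAbove D
      · set s := sSup D with hs
        have hxs : ∀ y ∈ D, x < y ∧ y ≤ s := fun y hy => ⟨(hDmem y hy).1, le_csSup hbdd hy⟩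
        obtain ⟨y₀, hy₀⟩ := id hne
        have hxls : x < s := lt_of_lt_of_le (hxs y₀ hy₀).1 (hxs y₀ hy₀).2
        have hGs : G μ s = G μ x := by
          apply le_antisymm
          · rw [← (hDmem y₀ hy₀).2]
            exact G_anti μ (hxs y₀ hy₀).2
          · have hev : ∀ z ∈ Iio s, G μ x ≤ G μ z := by
              intro z hz
              obtain ⟨y, hyD, hzy⟩ := exists_lt_of_lt_csSup hne hz
              rw [← (hDmem y hyD).2]
              exact G_anti μ hzy.le
            have hlim : Tendsto (G μ) (𝓝[<] s) (𝓝 (G μ s)) :=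
              (hGc.tendsto s).mono_left nhdsWithin_le_nhds
            exact ge_of_tendsto hlim (eventually_nhdsWithin_of_forall hev)
        have hDsub : D ⊆ Set.Ioc x s := fun y hy => ⟨(hxs y hy).1, (hxs y hy).2⟩
        have : μ (Set.Ioc x s) = 0 := by
          have hIoc : Set.Ioc x s = Set.Ioi x \ Set.Ioi s := by
            ext z; simp only [mem_Ioc, mem_diff, mem_Ioi, not_lt]
          rw [hIoc, measure_diff (Ioi_subset_Ioi hxls.le) measurableSet_Ioi.nullMeasurableSet
            (measure_ne_top μ _), measure_Ioi_eq_ofReal, measure_Ioi_eq_ofReal, hGs, tsub_self]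
        exact measure_mono_null hDsub this
      · -- not bounded above: G μ x = 0
        have hGx : G μ x = 0 := by
          refine le_antisymm ?_ (G_nonneg μ x)
          refine ge_of_tendsto (G_tendsto_atTop μ) ?_
          rw [eventually_atTop]
          refine ⟨x, fun b hb => ?_⟩
          rw [not_bddAbove_iff] at hbdd
          obtain ⟨y, hyD, hby⟩ := hbdd b
          rw [← (hDmem y hyD).2]
          exact G_anti μ hby.le
        have : μ (Set.Ioi x) = 0 := by
          rw [measure_Ioi_eq_ofReal, hGx, ENNReal.ofReal_zero]
        exact measure_mono_null diff_subset this
    · rw [not_nonempty_iff_eq_empty] at hne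
      simp [hne]
  refine ⟨hdiff, measure_mono_null (fun y hy => absurd (hsub hy.1) hy.2) (measure_empty (μ := μ))⟩

lemma tail_integral (hcont : ∀ x : ℝ, μ {x} = 0) (α : ℝ) (hα : 0 < α) (x : ℝ) :
    IntegrableOn (fun y => α * G μ y ^ (α - 1)) (Set.Ioi x) μ ∧
    ∫ y in Set.Ioi x, α * G μ y ^ (α - 1) ∂μ = G μ x ^ α := by
  have hGm := G_meas μ
  set c := G μ x with hc
  have hc0 : 0 ≤ c := G_nonneg μ x
  have hc1 : c ≤ 1 := G_le_one μ x
  set f : ℝ → ℝ := fun t => α * t ^ (α - 1) with hf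
  have hfmeas : Measurable f := (measurable_id.pow_const _).const_mul α
  -- restrict congr
  have hres : μ.restrict (Set.Ioi x) = μ.restrict (G μ ⁻¹' Set.Iio c) := by
    refine Measure.restrict_congr_set ?_
    exact Ioi_ae_eq μ hcont x
  -- map of restricted measure
  have hmap : (μ.restrict (G μ ⁻¹' Set.Iio c)).map (G μ)
      = volume.restrict (Set.Ioo 0 c) := by
    rw [← Measure.restrict_map hGm measurableSet_Iio, map_G μ hcont,
      Measure.restrict_restrict measurableSet_Iio]
    congr 1
    ext z
    simp only [mem_inter_iff, mem_Iio, mem_Ioc, mem_Ioo]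
    constructor
    · rintro ⟨h1, h2, h3⟩; exact ⟨h2, h1⟩
    · rintro ⟨h1, h2⟩; exact ⟨h2, h1, le_trans h2.le hc1⟩
  -- integrability of f on Ioo 0 c
  have hint : IntegrableOn f (Set.Ioo 0 c) volume := by
    have : IntervalIntegrable (fun t : ℝ => t ^ (α - 1)) volume 0 c := by
      apply intervalIntegral.intervalIntegrable_rpow' (by linarith)
    have h2 : IntegrableOn (fun t : ℝ => t ^ (α - 1)) (Set.Ioc 0 c) volume := by
      rcases this with ⟨h, _⟩
      exact h
    exact ((h2.mono_set Set.Ioo_subset_Ioc_self).const_mul α)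
  -- value of the model integral
  have hval : ∫ t in Set.Ioo 0 c, f t = c ^ α := by
    rw [show (∫ t in Set.Ioo 0 c, f t) = ∫ t in Set.Ioc 0 c, f t from
      (integral_Ioc_eq_integral_Ioo).symm,
      ← intervalIntegral.integral_of_le hc0]
    simp only [hf]
    rw [intervalIntegral.integral_const_mul, integral_rpow (Or.inl (by linarith))]
    rw [sub_add_cancel, Real.zero_rpow (ne_of_gt hα), sub_zero]
    field_simp
  -- transfer
  have hcomp : ∀ y : ℝ, f (G μ y) = α * G μ y ^ (α - 1) := fun y => rfl
  have hint2 : Integrable f (volume.restrict (Set.Ioo 0 c)) := hint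
  rw [← hmap] at hint2
  have hintG : IntegrableOn (fun y => α * G μ y ^ (α - 1)) (Set.Ioi x) μ := by
    rw [IntegrableOn, hres]
    exact (integrable_map_measure hfmeas.aestronglyMeasurable
      (hGm.aemeasurable.mono_measure Measure.restrict_le_self)).mp hint2
  refine ⟨hintG, ?_⟩
  calc ∫ y in Set.Ioi x, α * G μ y ^ (α - 1) ∂μ
      = ∫ y, f (G μ y) ∂(μ.restrict (G μ ⁻¹' Set.Iio c)) := by rw [← hres]
    _ = ∫ t, f t ∂((μ.restrict (G μ ⁻¹' Set.Iio c)).map (G μ)) := by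
        rw [integral_map (hGm.aemeasurable.mono_measure Measure.restrict_le_self)
          hfmeas.aestronglyMeasurable]
    _ = ∫ t in Set.Ioo 0 c, f t := by rw [hmap]
    _ = c ^ α := hval

end WCRTEAux

open WCRTEAux

theorem wcrte_alt_expression (μ : Measure ℝ) [IsProbabilityMeasure μ]
    (hsupp : μ (Set.Iio 0) = 0) (hcont : ∀ x : ℝ, μ {x} = 0)
    (α : ℝ) (hα : 0 < α) (hα1 : α ≠ 1)
    (hfin : IntegrableOn
      (fun x : ℝ => x * ((μ (Set.Ioi x)).toReal - (μ (Set.Ioi x)).toReal ^ α))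
      (Set.Ioi 0))
    (hfin2 : Integrable
      (fun x : ℝ => x ^ 2 * (1 - α * (μ (Set.Ioi x)).toReal ^ (α - 1))) μ) :
    (1/(α-1)) * ∫ x in Set.Ioi (0:ℝ),
        x * ((μ (Set.Ioi x)).toReal - (μ (Set.Ioi x)).toReal ^ α)
      = (1/(2*(α-1))) * ∫ x, x ^ 2 * (1 - α * (μ (Set.Ioi x)).toReal ^ (α - 1)) ∂μ := by
  have hGdef : ∀ x : ℝ, (μ (Set.Ioi x)).toReal = G μ x := fun _ => rfl
  simp only [hGdef] at hfin hfin2 ⊢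
  set h : ℝ → ℝ := fun y => 1 - α * G μ y ^ (α - 1) with hh
  have hmeas_h : Measurable h :=
    measurable_const.sub (((G_meas μ).pow_const _).const_mul α)
  -- pointwise identity
  have hE : ∀ x : ℝ, ∫ y in Set.Ioi x, h y ∂μ = G μ x - G μ x ^ α := by
    intro x
    have h1 : IntegrableOn (fun _ : ℝ => (1:ℝ)) (Set.Ioi x) μ :=
      (integrableOn_const_iff (C := (1:ℝ))).mpr (Or.inr (measure_lt_top μ _))
    have h2 := (tail_integral μ hcont α hα x).1
    rw [hh]
    rw [integral_sub h1 h2, (tail_integral μ hcont α hα x).2, setIntegral_const]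
    simp [hGdef]; rfl
  have hEint : ∀ x : ℝ, IntegrableOn h (Set.Ioi x) μ := by
    intro x
    have h1 : IntegrableOn (fun _ : ℝ => (1:ℝ)) (Set.Ioi x) μ :=
      (integrableOn_const_iff (C := (1:ℝ))).mpr (Or.inr (measure_lt_top μ _))
    exact h1.sub (tail_integral μ hcont α hα x).1
  -- the kernel for Fubini
  set F : ℝ → ℝ → ℝ := fun x y => Set.indicator (Set.Ioi x) (fun y => x * h y) y with hF
  have hFmeas : AEStronglyMeasurable (Function.uncurry F)
      ((volume.restrict (Set.Ioi 0)).prod μ) := by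
    have : Function.uncurry F = Set.indicator {p : ℝ × ℝ | p.1 < p.2}
        (fun p => p.1 * h p.2) := by
      ext p
      rcases p with ⟨x, y⟩
      simp only [Function.uncurry, hF, Set.indicator_apply, mem_Ioi, mem_setOf_eq]
    rw [this]
    exact ((measurable_fst.mul (hmeas_h.comp measurable_snd)).indicator
      (measurableSet_lt measurable_fst measurable_snd)).aestronglyMeasurable
  -- slice integrability and norms
  have hslice : ∀ y : ℝ, Integrable (fun x => F x y) (volume.restrict (Set.Ioi 0)) := by
    intro y
    have : (fun x => F x y) = Set.indicator (Set.Iio y) (fun x => x * h y) := by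
      ext x
      simp only [hF, Set.indicator_apply, mem_Ioi, mem_Iio]
    rw [this, integrable_indicator_iff measurableSet_Iio]
    rw [IntegrableOn, Measure.restrict_restrict measurableSet_Iio]
    have : Set.Iio y ∩ Set.Ioi 0 = Set.Ioo 0 y := by
      ext z; simp only [mem_inter_iff, mem_Iio, mem_Ioi, mem_Ioo]; tauto
    rw [this]
    exact ((continuous_id.mul continuous_const).integrableOn_Icc).mono_set Set.Ioo_subset_Icc_self
  have hnorm : ∀ᵐ y ∂μ, (∫ x, ‖F x y‖ ∂(volume.restrict (Set.Ioi 0)))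
      = (1/2) * ‖y ^ 2 * h y‖ := by
    have hae : ∀ᵐ y ∂μ, 0 ≤ y := by
      rw [ae_iff]
      refine measure_mono_null (fun y hy => ?_) hsupp
      simpa using hy
    filter_upwards [hae] with y hy
    have hres : ∀ g : ℝ → ℝ, ∫ x, Set.indicator (Set.Iio y) g x ∂(volume.restrict (Set.Ioi 0))
        = ∫ x in Set.Ioo 0 y, g x := by
      intro g
      have hset : Set.Iio y ∩ Set.Ioi 0 = Set.Ioo 0 y := by
        ext z; simp only [mem_inter_iff, mem_Iio, mem_Ioi, mem_Ioo]; tauto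
      rw [integral_indicator measurableSet_Iio, Measure.restrict_restrict measurableSet_Iio, hset]
    have h1 : (fun x => ‖F x y‖) = Set.indicator (Set.Iio y)
        (fun x => ‖x * h y‖) := by
      ext x
      simp only [hF, Set.indicator_apply, mem_Ioi, mem_Iio]
      split_ifs <;> simp
    rw [h1, hres]
    have h2 : ∀ x ∈ Set.Ioo 0 y, ‖x * h y‖ = |h y| * x := by
      intro x hx
      rw [norm_mul, Real.norm_eq_abs, Real.norm_eq_abs, abs_of_pos hx.1, mul_comm]
    rw [setIntegral_congr_fun measurableSet_Ioo h2, integral_const_mul]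
    have h3 : ∫ x in Set.Ioo 0 y, x = y ^ 2 / 2 := by
      rw [show (∫ x in Set.Ioo 0 y, x) = ∫ x in Set.Ioc 0 y, x from
        (integral_Ioc_eq_integral_Ioo).symm, ← intervalIntegral.integral_of_le hy]
      simpa using intervalIntegral.integral_id (a := 0) (b := y)
    rw [h3, norm_mul, Real.norm_eq_abs, Real.norm_eq_abs, abs_of_nonneg (sq_nonneg y), sq]
    ring
  -- integrability on the product
  have hprod : Integrable (Function.uncurry F) ((volume.restrict (Set.Ioi 0)).prod μ) := by
    rw [integrable_prod_iff' hFmeas]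
    constructor
    · exact Filter.Eventually.of_forall hslice
    · exact Integrable.congr ((hfin2.norm).const_mul (1/2)) (hnorm.mono fun y hy => hy.symm)
  -- Fubini
  have hswap := integral_integral_swap hprod
  -- LHS inner
  have hL : ∀ x : ℝ, ∫ y, F x y ∂μ = x * (G μ x - G μ x ^ α) := by
    intro x
    rw [hF]
    rw [integral_indicator measurableSet_Ioi, integral_const_mul, hE x]
  -- RHS inner
  have hR : ∀ᵐ y ∂μ, (∫ x, F x y ∂(volume.restrict (Set.Ioi 0)))
      = (1/2) * (y ^ 2 * h y) := by
    have hae : ∀ᵐ y ∂μ, 0 ≤ y := by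
      rw [ae_iff]
      refine measure_mono_null (fun y hy => ?_) hsupp
      simpa using hy
    filter_upwards [hae] with y hy
    have h1 : (fun x => F x y) = Set.indicator (Set.Iio y) (fun x => x * h y) := by
      ext x
      simp only [hF, Set.indicator_apply, mem_Ioi, mem_Iio]
    rw [h1, integral_indicator measurableSet_Iio, Measure.restrict_restrict measurableSet_Iio]
    have h2 : Set.Iio y ∩ Set.Ioi 0 = Set.Ioo 0 y := by
      ext z; simp only [mem_inter_iff, mem_Iio, mem_Ioi, mem_Ioo]; tauto
    rw [h2, integral_mul_const]
    have h3 : ∫ x in Set.Ioo 0 y, x = y ^ 2 / 2 := by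
      rw [show (∫ x in Set.Ioo 0 y, x) = ∫ x in Set.Ioc 0 y, x from
        (integral_Ioc_eq_integral_Ioo).symm, ← intervalIntegral.integral_of_le hy]
      simpa using intervalIntegral.integral_id (a := 0) (b := y)
    rw [h3]
    ring
  -- assemble
  have key : ∫ x in Set.Ioi (0:ℝ), x * (G μ x - G μ x ^ α)
      = (1/2) * ∫ y, y ^ 2 * h y ∂μ := by
    calc ∫ x in Set.Ioi (0:ℝ), x * (G μ x - G μ x ^ α)
        = ∫ x in Set.Ioi (0:ℝ), ∫ y, F x y ∂μ := by
          refine setIntegral_congr_fun measurableSet_Ioi (fun x _ => ?_)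
          rw [hL x]
      _ = ∫ y, ∫ x, F x y ∂(volume.restrict (Set.Ioi 0)) ∂μ := hswap
      _ = ∫ y, (1/2) * (y ^ 2 * h y) ∂μ := integral_congr_ae hR
      _ = (1/2) * ∫ y, y ^ 2 * h y ∂μ := integral_const_mul _ _
  rw [key]
  set I2 := ∫ y, y ^ 2 * h y ∂μ with hI2
  have hne : α - 1 ≠ 0 := sub_ne_zero.mpr hα1
  field_simp
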